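/- Let R be a commutative ring with unity, p a prime, and s ≥ 1 an integer. The set W(p,s,R) = { x_0^{p^s} + p·x_1^{p^{s-1}} + ... + p^s·x_s : x_0,...,x_s ∈ R } is closed under addition and subtraction. -/

import Mathlib

open WittVector Finset

lemma mem_iff_ghost (R : Type*) [CommRing R] (p : ℕ) [Fact p.Prime] (s : ℕ) (w : R) :
    (∃ x : Fin (s + 1) → R,
        w = ∑ i : Fin (s + 1), (p : R) ^ (i : ℕ) * (x i) ^ (p ^ (s - (i : ℕ)))) ↔
    ∃ v : WittVector p R, ghostComponent s v = w := by
  have key : ∀ v : WittVector p R,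
      ghostComponent s v = ∑ i : Fin (s + 1), (p : R) ^ (i : ℕ) * (v.coeff i) ^ (p ^ (s - (i : ℕ))) := by
    intro v
    rw [ghostComponent_apply, aeval_wittPolynomial, Fin.sum_univ_eq_sum_range
      (fun i => (p : R) ^ i * (v.coeff i) ^ (p ^ (s - i)))]
  constructor
  · rintro ⟨x, rfl⟩
    refine ⟨WittVector.mk p (fun n => if h : n < s + 1 then x ⟨n, h⟩ else 0), ?_⟩
    rw [key]
    apply Finset.sum_congr rfl
    intro i _
    simp [WittVector.coeff_mk, i.isLt]
    exact fun h => absurd h (not_lt.mpr (Nat.lt_succ_iff.mp i.isLt))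
  · rintro ⟨v, rfl⟩
    exact ⟨fun i => v.coeff i, (key v)⟩

theorem witt_set_closed (R : Type*) [CommRing R] (p : ℕ) (hp : p.Prime)
    (s : ℕ) (hs : 1 ≤ s) :
    ∀ a ∈ {w : R | ∃ x : Fin (s + 1) → R,
        w = ∑ i : Fin (s + 1), (p : R) ^ (i : ℕ) * (x i) ^ (p ^ (s - (i : ℕ)))},
    ∀ b ∈ {w : R | ∃ x : Fin (s + 1) → R,
        w = ∑ i : Fin (s + 1), (p : R) ^ (i : ℕ) * (x i) ^ (p ^ (s - (i : ℕ)))},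
      (a + b) ∈ {w : R | ∃ x : Fin (s + 1) → R,
        w = ∑ i : Fin (s + 1), (p : R) ^ (i : ℕ) * (x i) ^ (p ^ (s - (i : ℕ)))} ∧
      (a - b) ∈ {w : R | ∃ x : Fin (s + 1) → R,
        w = ∑ i : Fin (s + 1), (p : R) ^ (i : ℕ) * (x i) ^ (p ^ (s - (i : ℕ)))} := by
  haveI : Fact p.Prime := ⟨hp⟩
  intro a ha b hb
  rw [Set.mem_setOf_eq, mem_iff_ghost R p s] at ha hb ⊢
  rw [Set.mem_setOf_eq, mem_iff_ghost R p s]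
  obtain ⟨va, rfl⟩ := ha
  obtain ⟨vb, rfl⟩ := hb
  exact ⟨⟨va + vb, map_add _ _ _⟩, ⟨va - vb, map_sub _ _ _⟩⟩
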